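/- Let m > n be an integer. Suppose μ ∈ Xf lies in C₀ (i.e. 0 < ⟨μ_j + η₀, α^∨⟩ < p for all j and positive coroots α^∨), ν ∈ Xf satisfies |⟨ν_j, α^∨⟩| ≤ n − 1 for all j and all coroots α^∨, and there exist σ, w ∈ Wf and ν′ ∈ Xf such that σ(μ + ν + η) + pν′ − σ w π(σ)^{−1} π(ν′) − η is m-deep in C₀. Then μ is (m − n)-deep in C₀. -/

import Mathlib

/-!
Common setup: the extended affine Weyl group of `GL_n` (f-fold product), its dot
action on `(ℝ^n)^f`, p-alcoves, lengths, Bruhat orders (dominant and antidominant),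
the up (↑) order, admissible sets, and the combinatorics of lowest alcove
presentations, following Le–Le Hung–Levin, "Weight elimination in Serre-type
conjectures".
-/

noncomputable section

namespace LLLSerre

open scoped BigOperators

/-- `η₀ = (n-1, n-2, …, 1, 0)`. -/
def eta0 (n : ℕ) : Fin n → ℤ := fun i => (n : ℤ) - 1 - (i : ℤ)

/-- The action of a permutation on a vector: `(σ x) i = x (σ⁻¹ i)`. -/
def permAct {n : ℕ} {α : Type*} (σ : Equiv.Perm (Fin n)) (x : Fin n → α) : Fin n → α :=
  fun i => x (σ⁻¹ i)

/-- The weight lattice `Xf = (ℤ^n)^f`. -/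
abbrev Xf (n f : ℕ) := Fin f → Fin n → ℤ

/-- The f-fold product of Weyl groups `Wf = (S_n)^f`. -/
abbrev WfG (n f : ℕ) := Fin f → Equiv.Perm (Fin n)

/-- Points of `(ℝ^n)^f`. -/
abbrev RPt (n f : ℕ) := Fin f → Fin n → ℝ

/-- The extended affine Weyl group `Wtf = (X ⋊ W)^f`; the pair `(w, ν)` represents
`w t_ν`. -/
structure Wtf (n f : ℕ) where
  w : WfG n f
  t : Xf n f

/-- Multiplication in `Wtf`: `(w₁ t_{ν₁})(w₂ t_{ν₂}) = w₁w₂ t_{ν₂ + w₂⁻¹(ν₁)}`. -/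
def Wtf.mul {n f : ℕ} (a b : Wtf n f) : Wtf n f :=
  ⟨fun j => a.w j * b.w j, fun j => b.t j + permAct (b.w j)⁻¹ (a.t j)⟩

/-- Inversion in `Wtf`: `(w t_ν)⁻¹ = w⁻¹ t_{-w(ν)}`. -/
def Wtf.inv {n f : ℕ} (a : Wtf n f) : Wtf n f :=
  ⟨fun j => (a.w j)⁻¹, fun j => -(permAct (a.w j) (a.t j))⟩

/-- Embedding of the finite Weyl group `Wf` in `Wtf`. -/
def ofW {n f : ℕ} (w : WfG n f) : Wtf n f := ⟨w, fun _ _ => 0⟩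

/-- The translation `t_ν ∈ Wtf`. -/
def transl {n f : ℕ} (ν : Xf n f) : Wtf n f := ⟨fun _ => 1, ν⟩

/-- `η = (η₀, …, η₀) ∈ Xf`. -/
def etaf (n f : ℕ) : Xf n f := fun _ => eta0 n

/-- The longest element `w₀ ∈ Wf`. -/
def w0f (n f : ℕ) : WfG n f := fun _ => Fin.revPerm

/-- `w₀` as an element of `Wtf`. -/
def w0Elt (n f : ℕ) : Wtf n f := ofW (w0f n f)

/-- `w̃_h = w₀ t_{-η} ∈ Wtf`. -/
def whElt (n f : ℕ) : Wtf n f := ⟨w0f n f, fun _ i => -(eta0 n i)⟩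

/-- The dot action of `Wtf` on `(ℝ^n)^f`: `(w t_ν) · x = w(x + η + pν) − η`. -/
def dotR {n f : ℕ} (p : ℕ) (a : Wtf n f) (x : RPt n f) : RPt n f :=
  fun j i =>
    (x j ((a.w j)⁻¹ i) + ((eta0 n ((a.w j)⁻¹ i) : ℤ) : ℝ)
      + (p : ℝ) * ((a.t j ((a.w j)⁻¹ i) : ℤ) : ℝ)) - ((eta0 n i : ℤ) : ℝ)

/-- The dot action of `Wtf` on integral weights. -/
def dotZ {n f : ℕ} (p : ℕ) (a : Wtf n f) (lam : Xf n f) : Xf n f :=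
  fun j i =>
    (lam j ((a.w j)⁻¹ i) + eta0 n ((a.w j)⁻¹ i) + (p : ℤ) * a.t j ((a.w j)⁻¹ i)) - eta0 n i

/-- `⟨x_j + η₀, α_{ik}^∨⟩` for a real point `x`. -/
def prR {n f : ℕ} (x : RPt n f) (j : Fin f) (i k : Fin n) : ℝ :=
  (x j i + ((eta0 n i : ℤ) : ℝ)) - (x j k + ((eta0 n k : ℤ) : ℝ))

/-- `⟨λ_j + η₀, α_{ik}^∨⟩` for a weight `λ`. -/
def prZ {n f : ℕ} (lam : Xf n f) (j : Fin f) (i k : Fin n) : ℤ :=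
  (lam j i + eta0 n i) - (lam j k + eta0 n k)

/-- A point is (p-)regular if it lies on none of the affine hyperplanes
`⟨x_j + η₀, α^∨⟩ = pm`. -/
def regular {n f : ℕ} (p : ℕ) (x : RPt n f) : Prop :=
  ∀ (j : Fin f) (i k : Fin n) (m : ℤ), i < k → prR x j i k ≠ (p : ℝ) * (m : ℝ)

/-- Two regular points lie in the same p-alcove (same side of every hyperplane). -/
def sameAlcove {n f : ℕ} (p : ℕ) (x y : RPt n f) : Prop :=
  regular p x ∧ regular p y ∧
    ∀ (j : Fin f) (i k : Fin n) (m : ℤ), i < k →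
      (prR x j i k < (p : ℝ) * (m : ℝ) ↔ prR y j i k < (p : ℝ) * (m : ℝ))

/-- The root `α_{ik} = e_i - e_k` as a real vector. -/
def rootR {n : ℕ} (i k i' : Fin n) : ℝ :=
  (if i' = i then (1 : ℝ) else 0) - (if i' = k then (1 : ℝ) else 0)

/-- The affine reflection across the hyperplane `⟨x_j + η₀, α_{ik}^∨⟩ = pm`:
it replaces `x_j` by `x_j − (⟨x_j + η₀, α_{ik}^∨⟩ − pm) α_{ik}`. -/
def reflPt {n f : ℕ} (p : ℕ) (j : Fin f) (i k : Fin n) (m : ℤ) (x : RPt n f) : RPt n f :=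
  fun j' i' =>
    if j' = j then x j' i' - (prR x j i k - (p : ℝ) * (m : ℝ)) * rootR i k i' else x j' i'

/-- The origin, a point of the base alcove `C₀` (when `p > n`). -/
def basePt (n f : ℕ) : RPt n f := fun _ _ => 0

/-- The hyperplane indexed by `(j, i, k, m)` separates `x` from `y`. -/
def separates {n f : ℕ} (p : ℕ) (x y : RPt n f) (j : Fin f) (i k : Fin n) (m : ℤ) : Prop :=
  (prR x j i k < (p : ℝ) * (m : ℝ) ∧ (p : ℝ) * (m : ℝ) < prR y j i k) ∨
  (prR y j i k < (p : ℝ) * (m : ℝ) ∧ (p : ℝ) * (m : ℝ) < prR x j i k)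

/-- The length of `a ∈ Wtf` measured from the alcove of the base point `x`:
the number of hyperplanes separating the alcove of `x` from its image under `a`. -/
def lenFrom {n f : ℕ} (p : ℕ) (x : RPt n f) (a : Wtf n f) : ℕ :=
  Set.ncard {q : Fin f × Fin n × Fin n × ℤ |
    q.2.1 < q.2.2.1 ∧ separates p x (dotR p a x) q.1 q.2.1 q.2.2.1 q.2.2.2}

/-- Length relative to the dominant base alcove `C₀`. -/
def len {n f : ℕ} (p : ℕ) (a : Wtf n f) : ℕ := lenFrom p (basePt n f) a

/-- A point of the antidominant base alcove `w₀ · C₀`. -/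
def antiBasePt (n f p : ℕ) : RPt n f := dotR p (w0Elt n f) (basePt n f)

/-- Length relative to the antidominant base alcove `w₀ · C₀`. -/
def lenV {n f : ℕ} (p : ℕ) (a : Wtf n f) : ℕ := lenFrom p (antiBasePt n f p) a

/-- The affine Weyl group `Waf = (Λ_R ⋊ W)^f ⊆ Wtf`. -/
def Waf (n f : ℕ) : Set (Wtf n f) := {a | ∀ j, (∑ i, a.t j i) = 0}

/-- The stabilizer `Ωf` of the dominant base alcove `C₀`. -/
def Omegaf (n f p : ℕ) : Set (Wtf n f) :=
  {a | sameAlcove p (basePt n f) (dotR p a (basePt n f))}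

/-- The stabilizer of the antidominant base alcove `w₀ · C₀`. -/
def OmegaV (n f p : ℕ) : Set (Wtf n f) :=
  {a | sameAlcove p (antiBasePt n f p) (dotR p a (antiBasePt n f p))}

/-- `a ∈ Wtf` acts via the dot action as the affine reflection in a single hyperplane. -/
def isRefl {n f : ℕ} (p : ℕ) (a : Wtf n f) : Prop :=
  ∃ (j : Fin f) (i k : Fin n) (m : ℤ), i < k ∧ ∀ x, dotR p a x = reflPt p j i k m x

/-- One step of the Bruhat order (relative to the base point `x`):
`u < r u` for `r` a reflection with `ℓ(u) < ℓ(r u)`. -/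
def bruhatStepFrom {n f : ℕ} (p : ℕ) (x : RPt n f) (u v : Wtf n f) : Prop :=
  ∃ r, isRefl p r ∧ v = Wtf.mul r u ∧ lenFrom p x u < lenFrom p x v

/-- The Bruhat order on `Wtf` relative to the base alcove with representative
point `x` and stabilizer `Ω`: on `Waf` it is generated by the reflection steps,
and is extended to `Wtf` by `u ω ≤ v ω` for `u ≤ v` in `Waf`, `ω ∈ Ω`. -/
def bruhatLEFrom {n f : ℕ} (p : ℕ) (x : RPt n f) (Om : Set (Wtf n f)) (a b : Wtf n f) : Prop :=
  ∃ u v ω, u ∈ Waf n f ∧ v ∈ Waf n f ∧ ω ∈ Om ∧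
    a = Wtf.mul u ω ∧ b = Wtf.mul v ω ∧
    Relation.ReflTransGen (bruhatStepFrom p x) u v

/-- The Bruhat order on `Wtf` relative to the dominant base alcove. -/
def bruhatLE {n f : ℕ} (p : ℕ) (a b : Wtf n f) : Prop :=
  bruhatLEFrom p (basePt n f) (Omegaf n f p) a b

/-- The Bruhat order on `Wtf` relative to the antidominant base alcove. -/
def bruhatLEV {n f : ℕ} (p : ℕ) (a b : Wtf n f) : Prop :=
  bruhatLEFrom p (antiBasePt n f p) (OmegaV n f p) a b

/-- The admissible set `Adm(λ) = {w̃ : w̃ ≤ t_{σ(λ)} for some σ ∈ Wf}` (dominant order). -/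
def Adm {n f : ℕ} (p : ℕ) (lam : Xf n f) : Set (Wtf n f) :=
  {a | ∃ σ : WfG n f, bruhatLE p a (transl (fun j => permAct (σ j) (lam j)))}

/-- The admissible set `Adm∨(λ)` (antidominant order). -/
def AdmV {n f : ℕ} (p : ℕ) (lam : Xf n f) : Set (Wtf n f) :=
  {a | ∃ σ : WfG n f, bruhatLEV p a (transl (fun j => permAct (σ j) (lam j)))}

/-- The anti-automorphism `w̃ = w t_ν ↦ w̃* = t_{ν*} w*` of `Wtf`, where
`(w*)_j = (w_{f-1-j})⁻¹` and `(ν*)_j = ν_{f-1-j}`. -/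
def wstar {n f : ℕ} (a : Wtf n f) : Wtf n f :=
  ⟨fun j => (a.w (Fin.rev j))⁻¹, fun j => permAct (a.w (Fin.rev j)) (a.t (Fin.rev j))⟩

/-- `ν ↦ ν*` on weights: `(ν*)_j = ν_{f-1-j}`. -/
def xstar {n f : ℕ} (lam : Xf n f) : Xf n f := fun j => lam (Fin.rev j)

/-- The cyclic shift `π` on weights: `(πν)_j = ν_{j-1}`. -/
def sh {n f : ℕ} (ν : Xf n f) : Xf n f := fun j => ν ((finRotate f)⁻¹ j)

/-- The cyclic shift `π` on `Wf`: `(πσ)_j = σ_{j-1}`. -/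
def shW {n f : ℕ} (σ : WfG n f) : WfG n f := fun j => σ ((finRotate f)⁻¹ j)

/-- The `Wf`-part of `^(ν,σ)(w, μ)`, namely `σ w π(σ)⁻¹`. -/
def conjW {n f : ℕ} (σ w : WfG n f) : WfG n f := fun j => σ j * w j * (shW σ j)⁻¹

/-- The `Xf`-part of `^(ν,σ)(w, μ)`, namely `σ(μ) + pν − σwπ(σ)⁻¹ π(ν)`. -/
def conjX {n f : ℕ} (p : ℕ) (ν : Xf n f) (σ w : WfG n f) (μ : Xf n f) : Xf n f :=
  fun j i => permAct (σ j) (μ j) i + (p : ℤ) * ν j i - permAct (conjW σ w j) (sh ν j) i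

/-- `(w, μ) ∼ (w', μ')`: `(w', μ') = ^(ν,σ)(w, μ)` for some `(ν, σ)`. -/
def pairEquiv {n f : ℕ} (p : ℕ) (w : WfG n f) (μ : Xf n f) (w' : WfG n f) (μ' : Xf n f) : Prop :=
  ∃ (ν : Xf n f) (σ : WfG n f), w' = conjW σ w ∧ μ' = conjX p ν σ w μ

/-- `λ` is m-deep in the base alcove `C₀`:
`m < ⟨λ_j + η₀, α^∨⟩ < p − m` for all `j` and positive coroots `α^∨`. -/
def deep {n f : ℕ} (p m : ℕ) (lam : Xf n f) : Prop :=
  ∀ (j : Fin f) (i k : Fin n), i < k →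
    (m : ℤ) < prZ lam j i k ∧ prZ lam j i k < (p : ℤ) - (m : ℤ)

/-- `λ` lies m-deep in its own p-alcove. -/
def deepInAlcove {n f : ℕ} (p m : ℕ) (lam : Xf n f) : Prop :=
  ∀ (j : Fin f) (i k : Fin n), i < k →
    ∃ N : ℤ, (p : ℤ) * N + (m : ℤ) < prZ lam j i k ∧
      prZ lam j i k < (p : ℤ) * (N + 1) - (m : ℤ)

/-- The p-restricted weights `X₁`. -/
def X1 (n f p : ℕ) : Set (Xf n f) :=
  {lam | ∀ (j : Fin f) (i : Fin n) (h : (i : ℕ) + 1 < n),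
    0 ≤ lam j i - lam j ⟨(i : ℕ) + 1, h⟩ ∧ lam j i - lam j ⟨(i : ℕ) + 1, h⟩ ≤ (p : ℤ) - 1}

/-- `X⁰`: weights pairing to 0 with every coroot. -/
def X0 (n f : ℕ) : Set (Xf n f) := {lam | ∀ (j : Fin f) (i k : Fin n), lam j i = lam j k}

/-- The alcove of the regular point `x` is dominant. -/
def dominantPt {n f : ℕ} (x : RPt n f) : Prop :=
  ∀ (j : Fin f) (i k : Fin n), i < k → 0 < prR x j i k

/-- The alcove of the regular point `x` is p-restricted. -/
def restrictedPt {n f : ℕ} (p : ℕ) (x : RPt n f) : Prop :=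
  ∀ (j : Fin f) (i : Fin n) (h : (i : ℕ) + 1 < n),
    0 < prR x j i ⟨(i : ℕ) + 1, h⟩ ∧ prR x j i ⟨(i : ℕ) + 1, h⟩ < (p : ℝ)

/-- `Wtf⁺`: the elements sending `C₀` to a dominant alcove under the dot action. -/
def WtfPlus (n f p : ℕ) : Set (Wtf n f) := {a | dominantPt (dotR p a (basePt n f))}

/-- One step of the up (↑) order on alcoves, via representative points:
stay in the same alcove, or apply a reflection across a hyperplane lying above. -/
def upStep {n f : ℕ} (p : ℕ) (x y : RPt n f) : Prop :=
  sameAlcove p x y ∨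
    ∃ (j : Fin f) (i k : Fin n) (m : ℤ), i < k ∧ prR x j i k < (p : ℝ) * (m : ℝ) ∧
      y = reflPt p j i k m x

/-- The up (↑) order on p-alcoves, via representative points. -/
def alcoveLE {n f : ℕ} (p : ℕ) (x y : RPt n f) : Prop :=
  Relation.ReflTransGen (upStep p) x y

/-- `w̃₁ ↑ w̃₂` on `Wtf`: `w̃₁ · C₀ ↑ w̃₂ · C₀` and `w̃₁, w̃₂` in the same right
`Waf`-coset. -/
def upOrd {n f : ℕ} (p : ℕ) (a b : Wtf n f) : Prop :=
  alcoveLE p (dotR p a (basePt n f)) (dotR p b (basePt n f)) ∧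
    Wtf.mul a (Wtf.inv b) ∈ Waf n f

/-- Realification of an integral weight. -/
def toR {n f : ℕ} (lam : Xf n f) : RPt n f := fun j i => ((lam j i : ℤ) : ℝ)

/-- The `Wf`-orbit of a point of `(ℝ^n)^f`. -/
def orbitR {n f : ℕ} (y : RPt n f) : Set (RPt n f) :=
  Set.range fun σ : WfG n f => fun j => permAct (σ j) (y j)

end LLLSerre


namespace LLLSerre

lemma prZ_anti {n f : ℕ} (lam : Xf n f) (j : Fin f) (i k : Fin n) :
    prZ lam j k i = - prZ lam j i k := by
  unfold prZ; ring

lemma key_identity {n f : ℕ} (p : ℕ) (μ ν ν' : Xf n f) (σ w : WfG n f)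
    (j : Fin f) (i k : Fin n) :
    prZ (conjX p ν' σ w (μ + ν + etaf n f) - etaf n f) j i k
      = prZ μ j ((σ j)⁻¹ i) ((σ j)⁻¹ k)
        + (ν j ((σ j)⁻¹ i) - ν j ((σ j)⁻¹ k))
        + (p : ℤ) * (ν' j i - ν' j k)
        - (ν' ((finRotate f)⁻¹ j) ((conjW σ w j)⁻¹ i)
            - ν' ((finRotate f)⁻¹ j) ((conjW σ w j)⁻¹ k)) := by
  simp [prZ, conjX, permAct, sh, etaf, Pi.add_apply, Pi.sub_apply]
  ring

end LLLSerre

namespace LLLSerre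

/-- let `m > n`. If `μ` lies in `C₀`, `|⟨ν_j, α^∨⟩| ≤ n − 1` for all
`j` and coroots, and `σ(μ + ν + η) + pν' − σwπ(σ)⁻¹π(ν') − η` is m-deep in `C₀`
for some `σ, w ∈ Wf` and `ν' ∈ Xf`, then `μ` is (m − n)-deep in `C₀`. -/
theorem statement17 (n f p : ℕ) (hn : 2 ≤ n) (hf : 1 ≤ f) (hp : p.Prime) (hnp : n < p)
    (m : ℕ) (hm : n < m) (μ ν : Xf n f)
    (hμ : deep p 0 μ)
    (hν : ∀ (j : Fin f) (i k : Fin n), i ≠ k → |ν j i - ν j k| ≤ (n : ℤ) - 1)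
    (σ w : WfG n f) (ν' : Xf n f)
    (h : deep p m (conjX p ν' σ w (μ + ν + etaf n f) - etaf n f)) :
    deep p (m - n) μ := by
  set lam' : Xf n f := conjX p ν' σ w (μ + ν + etaf n f) - etaf n f with hl
  -- basic numeric facts
  have hmn : (n : ℤ) < (m : ℤ) := by exact_mod_cast hm
  have hn2 : (2 : ℤ) ≤ (n : ℤ) := by exact_mod_cast hn
  have hpm : 2 * (m : ℤ) + 2 ≤ (p : ℤ) := by
    have h0 : (⟨0, by omega⟩ : Fin n) < ⟨1, by omega⟩ := by
      simp [Fin.lt_def]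
    have := h ⟨0, hf⟩ ⟨0, by omega⟩ ⟨1, by omega⟩ h0
    omega
  -- two-sided bounds on prZ lam' for any distinct pair
  have hLbd : ∀ (j : Fin f) (i k : Fin n), i ≠ k →
      (-(((p : ℤ) - m - 1)) ≤ prZ lam' j i k ∧ prZ lam' j i k ≤ (p : ℤ) - m - 1) ∧
        ((m : ℤ) + 1 ≤ prZ lam' j i k ∨ prZ lam' j i k ≤ -((m : ℤ) + 1)) := by
    intro j i k hik
    rcases hik.lt_or_gt with hlt | hlt
    · have := h j i k hlt
      exact ⟨⟨by omega, by omega⟩, Or.inl (by omega)⟩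
    · have h2 := h j k i hlt
      have h3 := prZ_anti lam' j i k
      exact ⟨⟨by omega, by omega⟩, Or.inr (by omega)⟩
  -- two-sided bounds on prZ μ for any distinct pair
  have hPbd : ∀ (j : Fin f) (a b : Fin n), a ≠ b →
      -(((p : ℤ) - 1)) ≤ prZ μ j a b ∧ prZ μ j a b ≤ (p : ℤ) - 1 := by
    intro j a b hab
    rcases hab.lt_or_gt with hlt | hlt
    · have := hμ j a b hlt
      constructor <;> omega
    · have h2 := hμ j b a hlt
      have h3 := prZ_anti μ j a b
      constructor <;> omega
  -- the difference function and its maximum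
  set g : Fin f × Fin n × Fin n → ℤ := fun x => ν' x.1 x.2.1 - ν' x.1 x.2.2 with hg
  have : Nonempty (Fin f × Fin n × Fin n) :=
    ⟨(⟨0, hf⟩, ⟨0, by omega⟩, ⟨0, by omega⟩)⟩
  obtain ⟨x₁, hmax⟩ := Finite.exists_max g
  set M : ℤ := g x₁ with hMdef
  have hub : ∀ (j : Fin f) (i k : Fin n), ν' j i - ν' j k ≤ M := fun j i k =>
    hmax (j, i, k)
  have hlb : ∀ (j : Fin f) (i k : Fin n), -M ≤ ν' j i - ν' j k := by
    intro j i k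
    have := hub j k i
    omega
  have hM0 : 0 ≤ M := by
    have := hub ⟨0, hf⟩ ⟨0, by omega⟩ ⟨0, by omega⟩
    have := hlb ⟨0, hf⟩ ⟨0, by omega⟩ ⟨0, by omega⟩
    omega
  -- the maximum is at most 1
  have hM1 : M ≤ 1 := by
    by_contra hc
    push_neg at hc
    have hM2 : 2 ≤ M := hc
    obtain ⟨j₁, i₁, k₁⟩ := x₁
    have hMval : M = ν' j₁ i₁ - ν' j₁ k₁ := rfl
    rcases eq_or_ne i₁ k₁ with he | he
    · subst he; omega
    · have hab : ((σ j₁)⁻¹ : Equiv.Perm (Fin n)) i₁ ≠ ((σ j₁)⁻¹ : Equiv.Perm (Fin n)) k₁ :=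
        (Equiv.injective _).ne he
      have hkey := key_identity p μ ν ν' σ w j₁ i₁ k₁
      rw [← hl] at hkey
      have hL := hLbd j₁ i₁ k₁ he
      have hP := hPbd j₁ _ _ hab
      have hνd := abs_le.mp (hν j₁ _ _ hab)
      have hd' := hub ((finRotate f)⁻¹ j₁) ((conjW σ w j₁)⁻¹ i₁) ((conjW σ w j₁)⁻¹ k₁)
      have e1 : (p : ℤ) * M ≤ 2 * (p : ℤ) + n - m - 3 + M := by
        rw [hMval]; linarith [hL.1.1, hL.1.2, hP.1, hP.2, hνd.1, hνd.2, hd', hkey]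
      have e2 : ((p : ℤ) - 1) * 2 ≤ ((p : ℤ) - 1) * M :=
        mul_le_mul_of_nonneg_left hM2 (by omega)
      nlinarith
  -- conclude
  intro j a b hab
  have habne : a ≠ b := ne_of_lt hab
  have hIK : (σ j) a ≠ (σ j) b := (Equiv.injective _).ne habne
  have hkey := key_identity p μ ν ν' σ w j ((σ j) a) ((σ j) b)
  rw [← hl] at hkey
  simp only [show ∀ x, (σ j)⁻¹ ((σ j) x) = x from fun x => by simp] at hkey
  have hL := hLbd j _ _ hIK
  have hP := hμ j a b hab
  have hνd := abs_le.mp (hν j a b habne)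
  have hd1 := hub j ((σ j) a) ((σ j) b)
  have hd2 := hlb j ((σ j) a) ((σ j) b)
  have hd'1 := hub ((finRotate f)⁻¹ j) ((conjW σ w j)⁻¹ ((σ j) a)) ((conjW σ w j)⁻¹ ((σ j) b))
  have hd'2 := hlb ((finRotate f)⁻¹ j) ((conjW σ w j)⁻¹ ((σ j) a)) ((conjW σ w j)⁻¹ ((σ j) b))
  have hd3 : ν' j ((σ j) a) - ν' j ((σ j) b) = -1 ∨ ν' j ((σ j) a) - ν' j ((σ j) b) = 0 ∨
      ν' j ((σ j) a) - ν' j ((σ j) b) = 1 := by omega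
  rcases hd3 with hd | hd | hd <;> rw [hd] at hkey <;>
    rcases hL.2 with hpos | hneg <;>
    constructor <;> omega


end LLLSerre
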